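/- Pointwise derivative bound for the dynamic relay: Let y be a dynamic relay solution for (u, ξ). Then |y'(t)| ≤ |g(u(t))| for a.e. t ∈ (0,T). -/

import Mathlib

open MeasureTheory Set

/-- The function `g(u) = k·(u − ρ₂)⁺ − k·(ρ₁ − u)⁺` driving the dynamic relay. -/
noncomputable def relayG (ρ₁ ρ₂ k u : ℝ) : ℝ :=
  k * max (u - ρ₂) 0 - k * max (ρ₁ - u) 0

/-- `y` (with a.e. derivative `y'`) is a dynamic relay solution on `[0,T]` for input `u`
and initial state `ξ`: `y ∈ H¹(0,T)` (encoded by `y' ∈ L²(0,T)` together with the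
fundamental-theorem-of-calculus representation), `y(0) = ξ`, `|y| ≤ 1` on `[0,T]`, and
`q(t) := g(u(t)) − y'(t)` satisfies `q(t)(z − y(t)) ≤ 0` for all `z ∈ [−1,1]`, a.e. `t`. -/
def IsDynRelay (T ρ₁ ρ₂ k : ℝ) (u : ℝ → ℝ) (ξ : ℝ) (y y' : ℝ → ℝ) : Prop :=
  MemLp y' 2 (volume.restrict (Ioc (0:ℝ) T)) ∧
  y 0 = ξ ∧
  (∀ t ∈ Icc (0:ℝ) T, y t = ξ + ∫ s in (0:ℝ)..t, y' s) ∧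
  (∀ t ∈ Icc (0:ℝ) T, |y t| ≤ 1) ∧
  (∀ᵐ t ∂(volume.restrict (Ioo (0:ℝ) T)),
    ∀ z ∈ Icc (-1:ℝ) 1, (relayG ρ₁ ρ₂ k (u t) - y' t) * (z - y t) ≤ 0)

/-- A density point of a set is an accumulation point of it. -/
lemma acc_of_density {A : Set ℝ} {t : ℝ}
    (h : Filter.Tendsto
      (fun r => volume (A ∩ Metric.closedBall t r) / volume (Metric.closedBall t r))
      (nhdsWithin 0 (Ioi 0)) (nhds 1)) :
    ∀ δ > (0:ℝ), ∃ s ∈ A, s ≠ t ∧ |s - t| ≤ δ := by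
  intro δ hδ
  by_contra hcon
  push_neg at hcon
  have h1 : ∀ᶠ r in nhdsWithin (0:ℝ) (Ioi 0),
      volume (A ∩ Metric.closedBall t r) / volume (Metric.closedBall t r) = 0 := by
    filter_upwards [Ioo_mem_nhdsGT_of_mem (by simp [hδ] : (0:ℝ) ∈ Ico 0 δ)]
      with r hr
    have hsub : A ∩ Metric.closedBall t r ⊆ {t} := by
      intro s hs
      rcases eq_or_ne s t with h | h
      · exact h
      · exfalso
        have hc := hcon s hs.1 h
        have hd : |s - t| ≤ r := by
          have h2 := hs.2; rwa [Metric.mem_closedBall, Real.dist_eq] at h2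
        linarith [hd.trans hr.2.le]
    have hz : volume (A ∩ Metric.closedBall t r) = 0 :=
      le_antisymm ((measure_mono hsub).trans (by simp)) zero_le
    simp [hz]
  have h2 : ∀ᶠ r in nhdsWithin (0:ℝ) (Ioi 0),
      (1/2 : ENNReal) < volume (A ∩ Metric.closedBall t r) / volume (Metric.closedBall t r) :=
    h.eventually (lt_mem_nhds (by norm_num))
  rcases (h1.and h2).exists with ⟨r, hr0, hrhalf⟩
  rw [hr0] at hrhalf
  simp at hrhalf

/-- If the primitive of an integrable `g` is constant on a set accumulating at a Lebesgue
point `t` of `g`, then `g t = 0`. -/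
lemma relay_g_zero_at (g : ℝ → ℝ) (hg : Integrable g volume) (t : ℝ) (A : Set ℝ)
    (hconst : ∀ s ∈ A, (∫ r in t..s, g r) = 0)
    (hleb : Filter.Tendsto (fun r => ⨍ s in Metric.closedBall t r, ‖g s - g t‖)
      (nhdsWithin 0 (Ioi 0)) (nhds 0))
    (hacc : ∀ δ > (0:ℝ), ∃ s ∈ A, s ≠ t ∧ |s - t| ≤ δ) :
    g t = 0 := by
  have key : ∀ s ∈ A, s ≠ t →
      |g t| ≤ 2 * ⨍ r in Metric.closedBall t |s - t|, ‖g r - g t‖ := by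
    intro s hs hst
    have habs : (0:ℝ) < |s - t| := abs_pos.2 (sub_ne_zero.2 hst)
    have hintcb : IntegrableOn (fun r => ‖g r - g t‖) (Metric.closedBall t |s - t|) volume :=
      (hg.integrableOn.sub (integrableOn_const (by
        rw [Real.volume_closedBall]; exact ENNReal.ofReal_ne_top))).norm
    have h1 : (∫ r in t..s, (g r - g t)) = -(g t * (s - t)) := by
      rw [intervalIntegral.integral_sub hg.intervalIntegrable intervalIntegrable_const,
        hconst s hs, intervalIntegral.integral_const, smul_eq_mul]
      ring
    have h2 : |g t| * |s - t| = ‖∫ r in t..s, (g r - g t)‖ := by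
      rw [h1, Real.norm_eq_abs, abs_neg, abs_mul, mul_comm]
    have hsubset : Set.uIoc t s ⊆ Metric.closedBall t |s - t| := by
      intro r hr
      rw [Metric.mem_closedBall, Real.dist_eq]
      rcases le_total t s with h | h
      · rw [uIoc_of_le h] at hr
        rw [abs_of_nonneg (by linarith [hr.1.le] : (0:ℝ) ≤ r - t),
          abs_of_nonneg (by linarith : (0:ℝ) ≤ s - t)]
        linarith [hr.2]
      · rw [uIoc_of_ge h] at hr
        rw [abs_of_nonpos (by linarith [hr.2] : r - t ≤ 0),
          abs_of_nonpos (by linarith : s - t ≤ 0)]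
        linarith [hr.1]
    have h3 : ‖∫ r in t..s, (g r - g t)‖ ≤
        ∫ r in Metric.closedBall t |s - t|, ‖g r - g t‖ := by
      refine (intervalIntegral.norm_integral_le_integral_norm_uIoc).trans ?_
      exact setIntegral_mono_set hintcb
        (Filter.Eventually.of_forall fun r => norm_nonneg _)
        (HasSubset.Subset.eventuallyLE hsubset)
    have h4 : (∫ r in Metric.closedBall t |s - t|, ‖g r - g t‖) =
        (2 * |s - t|) * ⨍ r in Metric.closedBall t |s - t|, ‖g r - g t‖ := by
      rw [setAverage_eq, Real.volume_real_closedBall (by linarith)]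
      rw [smul_eq_mul, ← mul_assoc, mul_inv_cancel₀ (by linarith), one_mul]
    have := h2.trans_le (h3.trans_eq h4)
    nlinarith [habs]
  have hfinal : ∀ ε > (0:ℝ), |g t| < ε := by
    intro ε hε
    have hev : ∀ᶠ r in nhdsWithin (0:ℝ) (Ioi 0),
        ⨍ s in Metric.closedBall t r, ‖g s - g t‖ < ε / 4 :=
      hleb.eventually (gt_mem_nhds (by linarith))
    rcases mem_nhdsGT_iff_exists_Ioc_subset.mp hev with ⟨δ, hδ, hδ'⟩
    have hδpos : (0:ℝ) < δ := hδ
    rcases hacc (δ/2) (by linarith) with ⟨s, hsA, hst, hsd⟩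
    have habs : (0:ℝ) < |s - t| := abs_pos.2 (sub_ne_zero.2 hst)
    have hlt : ⨍ r in Metric.closedBall t |s - t|, ‖g r - g t‖ < ε / 4 :=
      hδ' ⟨habs, hsd.trans (by linarith)⟩
    have := key s hsA hst
    linarith
  by_contra hne
  have : (0:ℝ) < |g t| := abs_pos.2 hne
  exact absurd (hfinal |g t| this) (lt_irrefl _)

/-- Pointwise derivative bound for the dynamic relay: `|y'(t)| ≤ |g(u(t))|` a.e. -/
theorem dyn_relay_derivative_bound (T ρ₁ ρ₂ k : ℝ)
    (hT : 0 < T) (hρ : ρ₁ < ρ₂) (hk : 0 < k)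
    (u : ℝ → ℝ) (hu : MemLp u 2 (volume.restrict (Ioc (0:ℝ) T)))
    (ξ : ℝ) (hξ : ξ ∈ Icc (-1:ℝ) 1)
    (y y' : ℝ → ℝ) (hy : IsDynRelay T ρ₁ ρ₂ k u ξ y y') :
    ∀ᵐ t ∂(volume.restrict (Ioo (0:ℝ) T)), |y' t| ≤ |relayG ρ₁ ρ₂ k (u t)| := by
  obtain ⟨hy'L2, hy0, hrep, hbnd, hVI⟩ := hy
  have hfin : Fact (volume (Ioc (0:ℝ) T) < ⊤) :=
    ⟨by rw [Real.volume_Ioc]; exact ENNReal.ofReal_lt_top⟩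
  have hy'int : IntegrableOn y' (Ioc (0:ℝ) T) volume :=
    hy'L2.integrable (by norm_num)
  set g : ℝ → ℝ := (Ioc (0:ℝ) T).indicator y' with hgdef
  have hgint : Integrable g volume :=
    (integrable_indicator_iff measurableSet_Ioc).2 hy'int
  set Y : ℝ → ℝ := fun t => ξ + ∫ s in (0:ℝ)..t, g s with hYdef
  have hYcont : Continuous Y :=
    continuous_const.add
      (intervalIntegral.continuous_primitive (fun a b => hgint.intervalIntegrable) 0)
  have hYeq : ∀ t ∈ Icc (0:ℝ) T, Y t = y t := by
    intro t ht
    show ξ + (∫ s in (0:ℝ)..t, g s) = y t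
    rw [hrep t ht]
    congr 1
    rw [intervalIntegral.integral_of_le ht.1, intervalIntegral.integral_of_le ht.1]
    apply setIntegral_congr_fun measurableSet_Ioc
    intro s hs
    exact indicator_of_mem (mem_Ioc.mpr ⟨hs.1, hs.2.trans ht.2⟩) y'
  -- Lebesgue points of g
  have hleb : ∀ᵐ t ∂(volume : Measure ℝ),
      Filter.Tendsto (fun r => ⨍ s in Metric.closedBall t r, ‖g s - g t‖)
        (nhdsWithin 0 (Ioi 0)) (nhds 0) := by
    filter_upwards [(Besicovitch.vitaliFamily (volume : Measure ℝ)).ae_tendsto_average_norm_sub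
      hgint.locallyIntegrable] with t ht
    exact ht.comp (Besicovitch.tendsto_filterAt volume t)
  -- density points of the level sets of Y
  have hA1 : MeasurableSet (Y ⁻¹' {1}) := hYcont.measurable (measurableSet_singleton _)
  have hA2 : MeasurableSet (Y ⁻¹' {-1}) := hYcont.measurable (measurableSet_singleton _)
  have hdens1 := Besicovitch.ae_tendsto_measure_inter_div_of_measurableSet volume hA1
  have hdens2 := Besicovitch.ae_tendsto_measure_inter_div_of_measurableSet volume hA2
  have hmem : ∀ᵐ t ∂(volume.restrict (Ioo (0:ℝ) T)), t ∈ Ioo (0:ℝ) T :=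
    ae_restrict_mem measurableSet_Ioo
  filter_upwards [hVI, hmem, ae_restrict_of_ae hleb, ae_restrict_of_ae hdens1,
    ae_restrict_of_ae hdens2] with t hVt htIoo hlebt hd1 hd2
  have htIcc : t ∈ Icc (0:ℝ) T := Ioo_subset_Icc_self htIoo
  have hyb : |y t| ≤ 1 := hbnd t htIcc
  have hgy : g t = y' t := indicator_of_mem (mem_Ioc.mpr ⟨htIoo.1, htIoo.2.le⟩) y'
  have hYt : Y t = y t := hYeq t htIcc
  rcases eq_or_lt_of_le hyb with h1 | h1
  · -- |y t| = 1 : boundary case, show y' t = 0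
    have hzero : g t = 0 := by
      rcases abs_eq (by norm_num : (0:ℝ) ≤ 1) |>.mp h1 with h | h
      · -- y t = 1
        have htA : t ∈ Y ⁻¹' {1} := by simp [mem_preimage, hYt, h]
        refine relay_g_zero_at g hgint t (Y ⁻¹' {1}) ?_ hlebt ?_
        · intro s hs
          have hYs : Y s = 1 := hs
          have hYt1 : Y t = 1 := htA
          have := intervalIntegral.integral_interval_sub_left
            (hgint.intervalIntegrable (a := 0) (b := s))
            (hgint.intervalIntegrable (a := 0) (b := t))
          rw [← this]
          have e1 : (∫ x in (0:ℝ)..s, g x) = Y s - ξ := by simp [hYdef]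
          have e2 : (∫ x in (0:ℝ)..t, g x) = Y t - ξ := by simp [hYdef]
          rw [e1, e2, hYs, hYt1]; ring
        · apply acc_of_density
          have : (Y ⁻¹' {1}).indicator (1 : ℝ → ENNReal) t = 1 := by
            rw [indicator_of_mem htA]; rfl
          rwa [this] at hd1
      · -- y t = -1
        have htA : t ∈ Y ⁻¹' {-1} := by simp [mem_preimage, hYt, h]
        refine relay_g_zero_at g hgint t (Y ⁻¹' {-1}) ?_ hlebt ?_
        · intro s hs
          have hYs : Y s = -1 := hs
          have hYt1 : Y t = -1 := htA
          have := intervalIntegral.integral_interval_sub_left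
            (hgint.intervalIntegrable (a := 0) (b := s))
            (hgint.intervalIntegrable (a := 0) (b := t))
          rw [← this]
          have e1 : (∫ x in (0:ℝ)..s, g x) = Y s - ξ := by simp [hYdef]
          have e2 : (∫ x in (0:ℝ)..t, g x) = Y t - ξ := by simp [hYdef]
          rw [e1, e2, hYs, hYt1]; ring
        · apply acc_of_density
          have : (Y ⁻¹' {-1}).indicator (1 : ℝ → ENNReal) t = 1 := by
            rw [indicator_of_mem htA]; rfl
          rwa [this] at hd2
    have : y' t = 0 := by rw [← hgy, hzero]
    rw [this, abs_zero]
    exact abs_nonneg _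
  · -- |y t| < 1 : interior case, y' t = relayG
    have hlt := abs_lt.mp h1
    have hq1 : (relayG ρ₁ ρ₂ k (u t) - y' t) * ((y t + 1)/2 - y t) ≤ 0 :=
      hVt ((y t + 1)/2) ⟨by linarith, by linarith⟩
    have hq2 : (relayG ρ₁ ρ₂ k (u t) - y' t) * ((y t - 1)/2 - y t) ≤ 0 :=
      hVt ((y t - 1)/2) ⟨by linarith, by linarith⟩
    have hqle : relayG ρ₁ ρ₂ k (u t) - y' t ≤ 0 := by nlinarith
    have hqge : 0 ≤ relayG ρ₁ ρ₂ k (u t) - y' t := by nlinarith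
    have : y' t = relayG ρ₁ ρ₂ k (u t) := by linarith
    rw [this]
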